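/- arXiv:2509.13446 — 12 statements merged into one kernel-verified Lean document; each statement's English description precedes it below -/
import Mathlib

section
/- Define p₀ := (D + √(D² + Π3²))/Π3², p₂ := √(2·p₀ + Π2)/Π3, p₁ := p₂·(Π3²·p₀ − D), and P := [[p₁, p₀],[p₀, p₂]]. Then P is a symmetric positive definite 2×2 real matrix satisfying the algebraic Riccati equation P·A + Aᵀ·P − Π3²·P·B·Bᵀ·P + Q = 0 with Q := [[1, 0],[0, Π2]], and the corresponding optimal LQR gain Π3²·Bᵀ·P equals the 1×2 row vector [K̂0, √(2·K̂0 + Π2·Π3²)], where K̂0 := D + √(D² + Π3²). (This is the frequency-domain solution of the LQR problem for the discretized wave equation with ℓ₂ state cost.) -/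
open Matrix Real

set_option maxHeartbeats 1000000 in
/-- Frequency-domain solution of the LQR problem for the discretized wave
equation with ℓ₂ state cost: the matrix `P` built from `p₀, p₁, p₂` is the
symmetric positive definite solution of the algebraic Riccati equation, and the
optimal gain `Π3²·Bᵀ·P` is `[K̂0, √(2·K̂0 + Π2·Π3²)]` with
`K̂0 = D + √(D² + Π3²)`. -/
theorem lqr_riccati_solution_l2 (n : ℕ) (hn : 1 ≤ n) (k : Fin n) (Pi2 Pi3 : ℝ)
    (hPi2 : 0 < Pi2) (hPi3 : 0 < Pi3) :
    let D : ℝ := -4 * Real.sin (Real.pi * ((k : ℕ) : ℝ) / (n : ℝ)) ^ 2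
    let A : Matrix (Fin 2) (Fin 2) ℝ := !![0, 1; D, 0]
    let B : Matrix (Fin 2) (Fin 1) ℝ := !![0; 1]
    let Q : Matrix (Fin 2) (Fin 2) ℝ := !![1, 0; 0, Pi2]
    let p₀ : ℝ := (D + Real.sqrt (D ^ 2 + Pi3 ^ 2)) / Pi3 ^ 2
    let p₂ : ℝ := Real.sqrt (2 * p₀ + Pi2) / Pi3
    let p₁ : ℝ := p₂ * (Pi3 ^ 2 * p₀ - D)
    let P : Matrix (Fin 2) (Fin 2) ℝ := !![p₁, p₀; p₀, p₂]
    let K₀ : ℝ := D + Real.sqrt (D ^ 2 + Pi3 ^ 2)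
    P.IsSymm ∧ P.PosDef ∧
      P * A + Aᵀ * P - Pi3 ^ 2 • (P * B * Bᵀ * P) + Q = 0 ∧
      Pi3 ^ 2 • (Bᵀ * P) = !![K₀, Real.sqrt (2 * K₀ + Pi2 * Pi3 ^ 2)] := by
  intro D A B Q p₀ p₂ p₁ P K₀
  have hD : D ≤ 0 := by
    have := sq_nonneg (Real.sin (Real.pi * ((k : ℕ) : ℝ) / (n : ℝ)))
    simp only [D]; nlinarith
  set s : ℝ := Real.sqrt (D ^ 2 + Pi3 ^ 2) with hs_def
  have hs2 : s ^ 2 = D ^ 2 + Pi3 ^ 2 := Real.sq_sqrt (by positivity)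
  have hsD : -D ≤ s := by
    rw [hs_def]
    calc -D = Real.sqrt (D ^ 2) := by rw [Real.sqrt_sq_eq_abs, abs_of_nonpos hD]
    _ ≤ _ := Real.sqrt_le_sqrt (by nlinarith)
  have hsp : 0 < s := by nlinarith
  have hDs : 0 ≤ D + s := by linarith
  have hPi3sq : (0:ℝ) < Pi3 ^ 2 := by positivity
  have hp0 : 0 ≤ p₀ := by positivity
  have hp0s : Pi3 ^ 2 * p₀ = D + s := by
    simp only [p₀]; rw [← hs_def]; field_simp
  have ht : 0 < 2 * p₀ + Pi2 := by linarith
  have hp2sq : Pi3 ^ 2 * p₂ ^ 2 = 2 * p₀ + Pi2 := by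
    have h : Real.sqrt (2 * p₀ + Pi2) ^ 2 = 2 * p₀ + Pi2 := Real.sq_sqrt ht.le
    show Pi3 ^ 2 * (Real.sqrt (2 * p₀ + Pi2) / Pi3) ^ 2 = 2 * p₀ + Pi2
    field_simp
    exact h
  have hp2 : 0 < p₂ := div_pos (Real.sqrt_pos.mpr ht) hPi3
  have hp1 : p₁ = p₂ * s := by simp only [p₁, hp0s]; ring
  have hK : K₀ = Pi3 ^ 2 * p₀ := hp0s.symm
  have hA : A = !![0, 1; D, 0] := rfl
  have hB : B = !![0; 1] := rfl
  have hQ : Q = !![1, 0; 0, Pi2] := rfl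
  have hP : P = !![p₁, p₀; p₀, p₂] := rfl
  clear_value s p₀ p₂ p₁ K₀ A B Q P
  clear hs_def
  clear_value D
  have hdet : p₀ ^ 2 < p₁ * p₂ := by
    have h2 : Pi3 ^ 2 * (p₁ * p₂) = (2 * p₀ + Pi2) * s := by rw [hp1]; nlinarith [hp2sq]
    have h3 : (Pi3 ^ 2 * p₀) ^ 2 ≤ Pi3 ^ 2 * p₀ * s := by rw [hp0s]; nlinarith
    nlinarith [hPi3sq, mul_pos hsp hPi2]
  have hs' : s = Pi3 ^ 2 * p₀ - D := by linarith [hp0s]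
  have h6 : (Pi3 ^ 2 * p₀ - D) ^ 2 = D ^ 2 + Pi3 ^ 2 := by rw [← hs']; exact hs2
  have h8 : Pi3 ^ 2 * (Pi3 ^ 2 * p₀ ^ 2 - 2 * (D * p₀) - 1) = Pi3 ^ 2 * 0 := by
    linear_combination h6
  have e11 : 2 * (D * p₀) - Pi3 ^ 2 * p₀ ^ 2 + 1 = 0 := by
    have := mul_left_cancel₀ hPi3sq.ne' h8; linarith
  refine ⟨?_, ?_, ?_, ?_⟩
  · show Pᵀ = P
    rw [hP]; ext i j; fin_cases i <;> fin_cases j <;> simp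
  · rw [Matrix.posDef_iff_dotProduct_mulVec]; constructor
    · show Pᴴ = P
      rw [hP]; ext i j; fin_cases i <;> fin_cases j <;> simp
    · intro x hx
      have hq : star x ⬝ᵥ P *ᵥ x = p₁ * x 0 ^ 2 + 2 * p₀ * (x 0 * x 1) + p₂ * x 1 ^ 2 := by
        rw [hP]; simp [dotProduct, Matrix.mulVec, Fin.sum_univ_two]; ring
      rw [hq]
      have hx' : x 0 ≠ 0 ∨ x 1 ≠ 0 := by
        by_contra h
        push_neg at h
        exact hx (funext fun i => by fin_cases i <;> simp [h.1, h.2])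
      have hp1pos : 0 < p₁ := by rw [hp1]; positivity
      rcases hx' with h | h
      · nlinarith [sq_nonneg (p₂ * x 1 + p₀ * x 0),
          mul_pos (sub_pos.mpr hdet) (mul_self_pos.mpr h), hp2]
      · nlinarith [sq_nonneg (p₁ * x 0 + p₀ * x 1),
          mul_pos (sub_pos.mpr hdet) (mul_self_pos.mpr h), hp1pos]
  · rw [hP, hA, hB, hQ]
    ext i j
    fin_cases i <;> fin_cases j <;>
      · simp [Matrix.mul_apply, Fin.sum_univ_two, Fin.sum_univ_one, Matrix.vecMul, dotProduct,
          Matrix.vecHead, Matrix.vecTail, Matrix.transpose_apply]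
        nlinarith [e11, hp2sq, hp1, hp0s]
  · have hK2 : Real.sqrt (2 * (Pi3 ^ 2 * p₀) + Pi2 * Pi3 ^ 2) = Pi3 ^ 2 * p₂ := by
      rw [show 2 * (Pi3 ^ 2 * p₀) + Pi2 * Pi3 ^ 2 = (Pi3 ^ 2 * p₂) ^ 2 by nlinarith [hp2sq],
        Real.sqrt_sq (by positivity)]
    rw [hB, hP]
    ext i j
    fin_cases i <;> fin_cases j <;>
      · simp [Matrix.mul_apply, Fin.sum_univ_two,
          Matrix.vecHead, Matrix.vecTail, Matrix.transpose_apply]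
        simp [hK, hK2]
end

section
/- Define s₀ := (D + √(D² + Π4²))/Π4², s₁ := √(2·s₀)/Π4, s₂ := s₁·(Π4²·s₀ − D), and S := [[s₁, s₀],[s₀, s₂]]. Then S is a symmetric positive definite 2×2 real matrix satisfying the filter algebraic Riccati equation A·S + S·Aᵀ + B·Bᵀ − S·Cᵀ·C·S = 0, and the corresponding Kalman filter gain S·Cᵀ equals the 2×1 column vector [√(2·L̂0/Π4), L̂0]ᵀ, where L̂0 := D/Π4 + √(D²/Π4² + 1). (This is the frequency-domain solution of the Kalman filtering problem for the discretized wave equation with ℓ₂ noise cost.) -/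
set_option maxHeartbeats 800000


open Matrix Real

/-- Frequency-domain solution of the Kalman filtering problem for the
discretized wave equation with ℓ₂ noise cost: the matrix `S` built from
`s₀, s₁, s₂` is the symmetric positive definite solution of the filter
algebraic Riccati equation, and the Kalman gain `S·Cᵀ` is
`[√(2·L̂0/Π4), L̂0]ᵀ` with `L̂0 = D/Π4 + √(D²/Π4² + 1)`. -/
theorem kf_riccati_solution_l2 (n : ℕ) (hn : 1 ≤ n) (k : Fin n) (Pi4 : ℝ)
    (hPi4 : 0 < Pi4) :
    let D : ℝ := -4 * Real.sin (Real.pi * ((k : ℕ) : ℝ) / (n : ℝ)) ^ 2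
    let A : Matrix (Fin 2) (Fin 2) ℝ := !![0, 1; D, 0]
    let B : Matrix (Fin 2) (Fin 1) ℝ := !![0; 1]
    let C : Matrix (Fin 1) (Fin 2) ℝ := !![Pi4, 0]
    let s₀ : ℝ := (D + Real.sqrt (D ^ 2 + Pi4 ^ 2)) / Pi4 ^ 2
    let s₁ : ℝ := Real.sqrt (2 * s₀) / Pi4
    let s₂ : ℝ := s₁ * (Pi4 ^ 2 * s₀ - D)
    let S : Matrix (Fin 2) (Fin 2) ℝ := !![s₁, s₀; s₀, s₂]
    let L₀ : ℝ := D / Pi4 + Real.sqrt (D ^ 2 / Pi4 ^ 2 + 1)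
    S.IsSymm ∧ S.PosDef ∧
      A * S + S * Aᵀ + B * Bᵀ - S * Cᵀ * C * S = 0 ∧
      S * Cᵀ = !![Real.sqrt (2 * L₀ / Pi4); L₀] := by
  intro D A B C s₀ s₁ s₂ S L₀
  have hA : A = !![0, 1; D, 0] := rfl
  have hB : B = !![0; 1] := rfl
  have hC : C = !![Pi4, 0] := rfl
  have hS : S = !![s₁, s₀; s₀, s₂] := rfl
  have hD : D ≤ 0 := by
    have := sq_nonneg (Real.sin (Real.pi * ((k : ℕ) : ℝ) / (n : ℝ)))
    simp only [D]; nlinarith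
  set R : ℝ := Real.sqrt (D ^ 2 + Pi4 ^ 2) with hRdef
  have hR2 : R ^ 2 = D ^ 2 + Pi4 ^ 2 := Real.sq_sqrt (by positivity)
  have hRnn : 0 ≤ R := Real.sqrt_nonneg _
  have hRD : -D < R := by nlinarith
  have hs₀ : 0 < s₀ := div_pos (by linarith) (by positivity)
  have hs₁ : 0 < s₁ := div_pos (Real.sqrt_pos.2 (by linarith)) hPi4
  have hs₁sq : s₁ ^ 2 * Pi4 ^ 2 = 2 * s₀ := by
    have : s₁ ^ 2 = (2 * s₀) / Pi4 ^ 2 := by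
      simp only [s₁, div_pow, Real.sq_sqrt (by linarith : (0:ℝ) ≤ 2 * s₀)]
    rw [this]; field_simp
  have key1 : Pi4 ^ 2 * s₀ = D + R := by
    simp only [s₀]; field_simp; rfl
  have hs₂ : s₂ = s₁ * (Pi4 ^ 2 * s₀ - D) := rfl
  have heq11 : 2 * D * s₀ + 1 - Pi4 ^ 2 * s₀ ^ 2 = 0 := by
    have h1 : Pi4 ^ 2 * s₀ ^ 2 = (D + R) * s₀ := by nlinarith [key1]
    have h2 : s₀ * (R - D) = 1 := by
      have : Pi4 ^ 2 * (s₀ * (R - D)) = (D + R) * (R - D) := by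
        rw [← key1]; ring
      nlinarith [hR2, this, sq_nonneg Pi4]
    nlinarith
  have hL : L₀ = s₀ * Pi4 := by
    have h1 : D ^ 2 / Pi4 ^ 2 + 1 = (R / Pi4) ^ 2 := by
      field_simp [hR2]; linarith [hR2]
    have h2 : Real.sqrt (D ^ 2 / Pi4 ^ 2 + 1) = R / Pi4 := by
      rw [h1, Real.sqrt_sq (by positivity)]
    simp only [L₀, h2, s₀]; field_simp; ring
  clear_value L₀ S s₂ s₁ s₀
  clear_value A B C D
  have hdet : 0 < s₁ * s₂ - s₀ ^ 2 := by
    have : s₁ * s₂ = s₁ ^ 2 * (Pi4 ^ 2 * s₀ - D) := by rw [hs₂]; ring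
    have h3 : s₁ ^ 2 = 2 * s₀ / Pi4 ^ 2 := by
      field_simp at hs₁sq ⊢; linarith
    rw [this, h3, key1]
    have : 2 * s₀ / Pi4 ^ 2 * (D + R - D) = 2 * s₀ * R / Pi4 ^ 2 := by ring
    rw [this]
    have hPRs : s₀ ^ 2 < 2 * s₀ * R / Pi4 ^ 2 := by
      rw [lt_div_iff₀ (by positivity)]
      have : s₀ * (Pi4 ^ 2 * s₀) = s₀ * (D + R) := by rw [key1]
      nlinarith
    linarith
  refine ⟨?_, ?_, ?_, ?_⟩
  · show Sᵀ = S
    rw [hS]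
    ext i j
    fin_cases i <;> fin_cases j <;>
      simp [Matrix.transpose_apply, Matrix.vecHead, Matrix.vecTail]
  · rw [Matrix.posDef_iff_dotProduct_mulVec]
    constructor
    · show Sᴴ = S
      rw [hS]
      ext i j
      fin_cases i <;> fin_cases j <;>
        simp [Matrix.conjTranspose_apply, Matrix.vecHead, Matrix.vecTail]
    · intro x hx
      have hx' : x 0 ≠ 0 ∨ x 1 ≠ 0 := by
        by_contra h
        push_neg at h
        apply hx
        ext i; fin_cases i <;> simp [h.1, h.2]
      have hval : (star x) ⬝ᵥ (S *ᵥ x) =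
          s₁ * x 0 ^ 2 + 2 * s₀ * (x 0 * x 1) + s₂ * x 1 ^ 2 := by
        simp [hS, Matrix.mulVec, dotProduct, Fin.sum_univ_two]
        ring
      rw [hval]
      rcases hx' with h | h
      · rcases eq_or_ne (x 1) 0 with h1 | h1
        · have h0 : x 0 ^ 2 > 0 := by positivity
          have e1 : x 1 ^ 2 = 0 := by rw [h1]; ring
          have e2 : 2 * s₀ * (x 0 * x 1) = 0 := by rw [h1]; ring
          nlinarith [mul_pos hs₁ h0]
        · have h2 : x 1 ^ 2 > 0 := by positivity
          nlinarith [sq_nonneg (s₁ * x 0 + s₀ * x 1), hdet, hs₁]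
      · have h2 : x 1 ^ 2 > 0 := by positivity
        nlinarith [sq_nonneg (s₁ * x 0 + s₀ * x 1), hdet, hs₁]
  · rw [hA, hB, hC, hS]
    ext i j
    fin_cases i <;> fin_cases j <;>
      simp [Matrix.mul_apply, Fin.sum_univ_two, Matrix.vecHead, Matrix.vecTail, Matrix.vecMul, dotProduct] <;>
      first
        | linear_combination -hs₁sq
        | linear_combination hs₂
        | linear_combination heq11
  · have hq : Real.sqrt (2 * L₀ / Pi4) = s₁ * Pi4 := by
      have h1 : 2 * L₀ / Pi4 = (s₁ * Pi4) ^ 2 := by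
        rw [hL]; field_simp; nlinarith [hs₁sq]
      rw [h1, Real.sqrt_sq (by positivity)]
    have hrhs : (!![Real.sqrt (2 * L₀ / Pi4); L₀] : Matrix (Fin 2) (Fin 1) ℝ)
        = !![s₁ * Pi4; s₀ * Pi4] := by rw [hq, hL]
    rw [hC, hS, hrhs]
    ext i j
    fin_cases i <;> fin_cases j <;>
      simp [Matrix.mul_apply, Fin.sum_univ_two, Matrix.vecHead, Matrix.vecTail] <;>
      ring
end

section
/- Define K̂0 := D + √(D² + Π3²·(1 − Π1·D)), p₀ := K̂0/Π3², p₂ := √(2·p₀ + Π2)/Π3, p₁ := p₂·(K̂0 − D), and P := [[p₁, p₀],[p₀, p₂]]. Then P is a symmetric positive definite 2×2 real matrix satisfying the LQR algebraic Riccati equation P·A + Aᵀ·P − Π3²·P·B·Bᵀ·P + Q = 0, and the corresponding optimal LQR gain Π3²·Bᵀ·P equals the 1×2 row vector [K̂0, √(2·K̂0 + Π2·Π3²)]. (This is the frequency-domain solution of the PDE-informed LQR problem with Sobolev-type state cost of weight Π1.) -/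
open Matrix Real


theorem lqr_mat_riccati (D Pi1 Pi2 Pi3 p₀ p₂ p₁ : ℝ)
    (e00 : p₀ * D + D * p₀ - Pi3 ^ 2 * (p₀ * p₀) + (1 - Pi1 * D) = 0)
    (e01 : p₁ + D * p₂ - Pi3 ^ 2 * (p₀ * p₂) = 0)
    (e11 : p₀ + p₀ - Pi3 ^ 2 * (p₂ * p₂) + Pi2 = 0) :
    !![p₁, p₀; p₀, p₂] * !![0, 1; D, 0] + (!![0, 1; D, 0] : Matrix (Fin 2) (Fin 2) ℝ)ᵀ * !![p₁, p₀; p₀, p₂]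
      - Pi3 ^ 2 • (!![p₁, p₀; p₀, p₂] * (!![0; 1] : Matrix (Fin 2) (Fin 1) ℝ) * (!![0; 1] : Matrix (Fin 2) (Fin 1) ℝ)ᵀ * !![p₁, p₀; p₀, p₂])
      + !![1 - Pi1 * D, 0; 0, Pi2] = 0 := by
  ext i j
  fin_cases i <;> fin_cases j <;>
    simp [Matrix.mul_apply, Fin.sum_univ_succ, Matrix.vecHead, Matrix.vecTail, Matrix.vecMul, dotProduct]
  · linarith
  · linear_combination e01
  · linear_combination e01
  · linarith

theorem lqr_mat_gain (D Pi2 Pi3 K₀ p₀ p₂ p₁ : ℝ)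
    (g0 : Pi3 ^ 2 * p₀ = K₀)
    (g1 : Pi3 ^ 2 * p₂ = Real.sqrt (2 * K₀ + Pi2 * Pi3 ^ 2)) :
    Pi3 ^ 2 • ((!![0; 1] : Matrix (Fin 2) (Fin 1) ℝ)ᵀ * !![p₁, p₀; p₀, p₂])
      = !![K₀, Real.sqrt (2 * K₀ + Pi2 * Pi3 ^ 2)] := by
  ext i j
  fin_cases i <;> fin_cases j <;>
    simp [Matrix.mul_apply, Fin.sum_univ_succ, Matrix.vecHead, Matrix.vecTail]
  · exact g0
  · exact g1

theorem lqr_mat_posdef (p₀ p₂ p₁ : ℝ) (hp1 : 0 < p₁) (hp2 : 0 < p₂)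
    (hdet : 0 < p₁ * p₂ - p₀ ^ 2) :
    (!![p₁, p₀; p₀, p₂] : Matrix (Fin 2) (Fin 2) ℝ).PosDef := by
  rw [Matrix.posDef_iff_dotProduct_mulVec]; constructor
  · rw [Matrix.IsHermitian]
    ext i j; fin_cases i <;> fin_cases j <;> simp
  · intro x hx
    have hx' : x 0 ≠ 0 ∨ x 1 ≠ 0 := by
      by_contra h
      push_neg at h
      exact hx (by ext i; fin_cases i <;> simp [h.1, h.2])
    simp only [Matrix.mulVec, dotProduct, Fin.sum_univ_succ, Fin.sum_univ_zero,
      RCLike.star_def, starRingEnd_apply, star_trivial]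
    simp [Matrix.vecHead, Matrix.vecTail]
    rcases hx' with h | h
    · nlinarith [sq_nonneg (p₂ * x 1 + p₀ * x 0), mul_self_pos.mpr h, hdet, hp2, hp1]
    · nlinarith [sq_nonneg (p₁ * x 0 + p₀ * x 1), mul_self_pos.mpr h, hdet, hp2, hp1]

theorem lqr_aux (D Pi1 Pi2 Pi3 K₀ p₀ p₂ p₁ : ℝ) (hD : D ≤ 0) (hPi1 : 0 ≤ Pi1)
    (hPi2 : 0 < Pi2) (hPi3 : 0 < Pi3)
    (hK : K₀ = D + Real.sqrt (D ^ 2 + Pi3 ^ 2 * (1 - Pi1 * D)))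
    (hp0 : p₀ = K₀ / Pi3 ^ 2)
    (hp2 : p₂ = Real.sqrt (2 * p₀ + Pi2) / Pi3)
    (hp1 : p₁ = p₂ * (K₀ - D)) :
    (!![p₁, p₀; p₀, p₂] : Matrix (Fin 2) (Fin 2) ℝ).IsSymm ∧
    (!![p₁, p₀; p₀, p₂] : Matrix (Fin 2) (Fin 2) ℝ).PosDef ∧
    !![p₁, p₀; p₀, p₂] * !![0, 1; D, 0] + (!![0, 1; D, 0] : Matrix (Fin 2) (Fin 2) ℝ)ᵀ * !![p₁, p₀; p₀, p₂]
      - Pi3 ^ 2 • (!![p₁, p₀; p₀, p₂] * (!![0; 1] : Matrix (Fin 2) (Fin 1) ℝ) * (!![0; 1] : Matrix (Fin 2) (Fin 1) ℝ)ᵀ * !![p₁, p₀; p₀, p₂])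
      + !![1 - Pi1 * D, 0; 0, Pi2] = 0 ∧
    Pi3 ^ 2 • ((!![0; 1] : Matrix (Fin 2) (Fin 1) ℝ)ᵀ * !![p₁, p₀; p₀, p₂]) = !![K₀, Real.sqrt (2 * K₀ + Pi2 * Pi3 ^ 2)] := by
  have h1 : (1:ℝ) ≤ 1 - Pi1 * D := by nlinarith
  have harg : 0 ≤ D ^ 2 + Pi3 ^ 2 * (1 - Pi1 * D) := by nlinarith [sq_nonneg D, sq_nonneg Pi3]
  set s := Real.sqrt (D ^ 2 + Pi3 ^ 2 * (1 - Pi1 * D)) with hs_def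
  have hs2 : s ^ 2 = D ^ 2 + Pi3 ^ 2 * (1 - Pi1 * D) := Real.sq_sqrt harg
  have hs_nonneg : 0 ≤ s := Real.sqrt_nonneg _
  have hKpos : 0 < K₀ := by
    rw [hK]
    nlinarith [hs2, hs_nonneg, hD, mul_pos (pow_pos hPi3 2) (show (0:ℝ) < 1 - Pi1 * D by linarith)]
  have hp0pos : 0 < p₀ := hp0 ▸ div_pos hKpos (pow_pos hPi3 2)
  have htarg : 0 < 2 * p₀ + Pi2 := by linarith
  set t := Real.sqrt (2 * p₀ + Pi2) with ht_def
  have ht2 : t ^ 2 = 2 * p₀ + Pi2 := Real.sq_sqrt htarg.le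
  have ht_pos : 0 < t := Real.sqrt_pos.mpr htarg
  have hp2pos : 0 < p₂ := hp2 ▸ div_pos ht_pos hPi3
  have hR1 : Pi3 ^ 2 * p₀ = K₀ := by rw [hp0]; field_simp
  have hR2 : Pi3 * p₂ = t := by rw [hp2]; field_simp
  have hKs : K₀ = D + s := hK
  have hP0D : Pi3 ^ 2 * p₀ = D + s := by rw [hR1, hKs]
  have hp1' : p₁ = p₂ * s := by rw [hp1, hKs]; ring
  have hspos : 0 < s := by nlinarith
  have hp1pos : 0 < p₁ := by rw [hp1']; positivity
  have hcancel : ∀ x : ℝ, Pi3 ^ 2 * x = 0 → x = 0 := by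
    intro x hx
    rcases mul_eq_zero.mp hx with h | h
    · exact absurd h (by positivity)
    · exact h
  have hdet : 0 < p₁ * p₂ - p₀ ^ 2 := by
    have h4 : Pi3 ^ 4 * (p₁ * p₂ - p₀ ^ 2) = Pi3 ^ 2 * (1 - Pi1 * D) + Pi2 * Pi3 ^ 2 * s := by
      have e : Pi3 ^ 4 * (p₁ * p₂ - p₀ ^ 2) = (Pi3 * p₂) ^ 2 * s * Pi3 ^ 2 - (Pi3 ^ 2 * p₀) ^ 2 := by
        rw [hp1']; ring
      rw [e, hR2, ht2]
      linear_combination hs2 - (Pi3 ^ 2 * p₀ - s + D) * hP0D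
    have hrhs : 0 < Pi3 ^ 2 * (1 - Pi1 * D) + Pi2 * Pi3 ^ 2 * s := by
      have h5 := mul_pos (pow_pos hPi3 2) (show (0:ℝ) < 1 - Pi1 * D by linarith)
      nlinarith [mul_nonneg (mul_nonneg hPi2.le (sq_nonneg Pi3)) hs_nonneg]
    nlinarith [pow_pos hPi3 4, h4, hrhs]
  have e00 : p₀ * D + D * p₀ - Pi3 ^ 2 * (p₀ * p₀) + (1 - Pi1 * D) = 0 :=
    hcancel _ (by linear_combination (-(Pi3 ^ 2 * p₀ - D + s)) * hP0D - hs2)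
  have e01 : p₁ + D * p₂ - Pi3 ^ 2 * (p₀ * p₂) = 0 := by
    linear_combination hp1' - p₂ * hP0D
  have e11 : p₀ + p₀ - Pi3 ^ 2 * (p₂ * p₂) + Pi2 = 0 := by
    linear_combination -ht2 - (Pi3 * p₂ + t) * hR2
  have hgain : Pi3 ^ 2 * p₂ = Real.sqrt (2 * K₀ + Pi2 * Pi3 ^ 2) := by
    have e : 2 * K₀ + Pi2 * Pi3 ^ 2 = Pi3 ^ 2 * (2 * p₀ + Pi2) := by linear_combination -2 * hR1
    rw [e, Real.sqrt_mul (by positivity : (0:ℝ) ≤ Pi3 ^ 2), Real.sqrt_sq hPi3.le, ← ht_def]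
    linear_combination Pi3 * hR2
  refine ⟨?_, lqr_mat_posdef _ _ _ hp1pos hp2pos hdet,
    lqr_mat_riccati D Pi1 Pi2 Pi3 _ _ _ e00 e01 e11, lqr_mat_gain D Pi2 Pi3 _ _ _ _ hR1 hgain⟩
  ext i j; fin_cases i <;> fin_cases j <;> simp [Matrix.IsSymm]


/-- Frequency-domain solution of the PDE-informed LQR problem with Sobolev-type
state cost of weight `Π1`: the matrix `P` built from `p₀, p₁, p₂` is the
symmetric positive definite solution of the LQR algebraic Riccati equation, and
the optimal gain `Π3²·Bᵀ·P` is `[K̂0, √(2·K̂0 + Π2·Π3²)]` with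
`K̂0 = D + √(D² + Π3²·(1 − Π1·D))`. -/
theorem lqr_riccati_solution_sobolev (n : ℕ) (hn : 1 ≤ n) (k : Fin n)
    (Pi1 Pi2 Pi3 : ℝ) (hPi1 : 0 ≤ Pi1) (hPi2 : 0 < Pi2) (hPi3 : 0 < Pi3) :
    let D : ℝ := -4 * Real.sin (Real.pi * ((k : ℕ) : ℝ) / (n : ℝ)) ^ 2
    let A : Matrix (Fin 2) (Fin 2) ℝ := !![0, 1; D, 0]
    let B : Matrix (Fin 2) (Fin 1) ℝ := !![0; 1]
    let Q : Matrix (Fin 2) (Fin 2) ℝ := !![1 - Pi1 * D, 0; 0, Pi2]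
    let K₀ : ℝ := D + Real.sqrt (D ^ 2 + Pi3 ^ 2 * (1 - Pi1 * D))
    let p₀ : ℝ := K₀ / Pi3 ^ 2
    let p₂ : ℝ := Real.sqrt (2 * p₀ + Pi2) / Pi3
    let p₁ : ℝ := p₂ * (K₀ - D)
    let P : Matrix (Fin 2) (Fin 2) ℝ := !![p₁, p₀; p₀, p₂]
    P.IsSymm ∧ P.PosDef ∧
      P * A + Aᵀ * P - Pi3 ^ 2 • (P * B * Bᵀ * P) + Q = 0 ∧
      Pi3 ^ 2 • (Bᵀ * P) = !![K₀, Real.sqrt (2 * K₀ + Pi2 * Pi3 ^ 2)] := by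
  intro D A B Q K₀ p₀ p₂ p₁ P
  have hD : D ≤ 0 := by
    have := sq_nonneg (Real.sin (Real.pi * ((k : ℕ) : ℝ) / (n : ℝ)))
    simp only [D]
    nlinarith
  exact lqr_aux D Pi1 Pi2 Pi3 K₀ p₀ p₂ p₁ hD hPi1 hPi2 hPi3 rfl rfl rfl rfl
end

section
/- Define L̂0 := D/Π4 + √(D²/Π4² − Π1·D + 1), s₀ := L̂0/(Π4·q), s₁ := √(2·s₀/(Π4²·q)), s₂ := s₁·(Π4·L̂0 − D), and S := [[s₁, s₀],[s₀, s₂]]. Then S is a symmetric positive definite 2×2 real matrix satisfying the filter algebraic Riccati equation A·S + S·Aᵀ + B·Bᵀ − q·S·Cᵀ·C·S = 0, and the corresponding Kalman filter gain q·S·Cᵀ equals the 2×1 column vector [√(2·L̂0/Π4), L̂0]ᵀ. (This is the frequency-domain solution of the PDE-informed Kalman filtering problem with Sobolev-type measurement-noise cost of weight Π1.) -/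
open Matrix Real

set_option maxHeartbeats 1000000 in
/-- Frequency-domain solution of the PDE-informed Kalman filtering problem with
Sobolev-type measurement-noise cost of weight `Π1`: the matrix `S` built from
`s₀, s₁, s₂` is the symmetric positive definite solution of the filter
algebraic Riccati equation with measurement weight `q = 1 − Π1·D`, and the
Kalman gain `q·S·Cᵀ` is `[√(2·L̂0/Π4), L̂0]ᵀ` with
`L̂0 = D/Π4 + √(D²/Π4² − Π1·D + 1)`. -/
theorem kf_riccati_solution_sobolev (n : ℕ) (hn : 1 ≤ n) (k : Fin n)
    (Pi1 Pi4 : ℝ) (hPi1 : 0 ≤ Pi1) (hPi4 : 0 < Pi4) :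
    let D : ℝ := -4 * Real.sin (Real.pi * ((k : ℕ) : ℝ) / (n : ℝ)) ^ 2
    let q : ℝ := 1 - Pi1 * D
    let A : Matrix (Fin 2) (Fin 2) ℝ := !![0, 1; D, 0]
    let B : Matrix (Fin 2) (Fin 1) ℝ := !![0; 1]
    let C : Matrix (Fin 1) (Fin 2) ℝ := !![Pi4, 0]
    let L₀ : ℝ := D / Pi4 + Real.sqrt (D ^ 2 / Pi4 ^ 2 - Pi1 * D + 1)
    let s₀ : ℝ := L₀ / (Pi4 * q)
    let s₁ : ℝ := Real.sqrt (2 * s₀ / (Pi4 ^ 2 * q))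
    let s₂ : ℝ := s₁ * (Pi4 * L₀ - D)
    let S : Matrix (Fin 2) (Fin 2) ℝ := !![s₁, s₀; s₀, s₂]
    S.IsSymm ∧ S.PosDef ∧
      A * S + S * Aᵀ + B * Bᵀ - q • (S * Cᵀ * C * S) = 0 ∧
      q • (S * Cᵀ) = !![Real.sqrt (2 * L₀ / Pi4); L₀] := by
  intro D q A B C L₀ s₀ s₁ s₂ S
  have hD : D ≤ 0 := by
    have h := sq_nonneg (Real.sin (Real.pi * ((k : ℕ) : ℝ) / (n : ℝ)))
    show -4 * Real.sin (Real.pi * ((k : ℕ) : ℝ) / (n : ℝ)) ^ 2 ≤ 0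
    linarith
  have hqdef : q = 1 - Pi1 * D := rfl
  have hq1 : (1:ℝ) ≤ q := by
    rw [hqdef]; nlinarith [mul_nonneg hPi1 (neg_nonneg.mpr hD)]
  have hq : (0:ℝ) < q := by linarith
  clear_value D q
  set r := Real.sqrt (D ^ 2 / Pi4 ^ 2 - Pi1 * D + 1) with hrdef
  have hrnn : 0 ≤ r := Real.sqrt_nonneg _
  have harg : 0 ≤ D ^ 2 / Pi4 ^ 2 - Pi1 * D + 1 := by
    have h1 : (0:ℝ) ≤ D ^ 2 / Pi4 ^ 2 := by positivity
    nlinarith [mul_nonneg hPi1 (neg_nonneg.mpr hD)]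
  have hr2 : r ^ 2 = D ^ 2 / Pi4 ^ 2 + q := by
    rw [hrdef, Real.sq_sqrt harg, hqdef]; ring
  have hL0 : L₀ = D / Pi4 + r := rfl
  have hL : 0 < L₀ := by
    rw [hL0]
    by_contra h
    push_neg at h
    have h2 : r * (D / Pi4 + r) ≤ 0 := mul_nonpos_of_nonneg_of_nonpos hrnn h
    have h3 : D ^ 2 / Pi4 ^ 2 = (D / Pi4) ^ 2 := (div_pow D Pi4 2).symm
    nlinarith [hr2, hq, h2, h3, sq_nonneg (D / Pi4 + r)]
  have key : L₀ ^ 2 - 2 * D * L₀ / Pi4 = q := by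
    rw [hL0]; linear_combination hr2
  have K : Pi4 * L₀ ^ 2 - 2 * D * L₀ = Pi4 * q := by
    have h := key
    field_simp at h
    linarith
  have hs0def : s₀ = L₀ / (Pi4 * q) := rfl
  have hs0 : 0 < s₀ := by rw [hs0def]; exact div_pos hL (mul_pos hPi4 hq)
  have E0 : Pi4 * q * s₀ = L₀ := by
    rw [hs0def]; field_simp
  have hs1def : s₁ = Real.sqrt (2 * s₀ / (Pi4 ^ 2 * q)) := rfl
  have hargs1 : 0 ≤ 2 * s₀ / (Pi4 ^ 2 * q) :=
    le_of_lt (div_pos (by linarith) (mul_pos (pow_pos hPi4 2) hq))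
  have hs1sq : s₁ ^ 2 = 2 * s₀ / (Pi4 ^ 2 * q) := by
    rw [hs1def, Real.sq_sqrt hargs1]
  have hs1 : 0 < s₁ := by
    rw [hs1def]
    exact Real.sqrt_pos.mpr (div_pos (by linarith) (mul_pos (pow_pos hPi4 2) hq))
  have E1 : Pi4 ^ 2 * q * s₁ ^ 2 = 2 * s₀ := by
    rw [hs1sq]; field_simp
  have hPL : 0 < Pi4 * L₀ - D := by nlinarith [mul_pos hPi4 hL]
  have hs2def : s₂ = s₁ * (Pi4 * L₀ - D) := rfl
  have hs2 : 0 < s₂ := by rw [hs2def]; exact mul_pos hs1 hPL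
  clear_value r L₀ s₀ s₁ s₂
  have K2 : q * Pi4 ^ 2 * s₀ ^ 2 - 2 * D * s₀ - 1 = 0 := by
    have hpq : Pi4 * q ≠ 0 := (mul_pos hPi4 hq).ne'
    apply mul_left_cancel₀ hpq
    rw [← E0] at K
    linear_combination K
  have hdetpos : 0 < s₁ * s₂ - s₀ * s₀ := by
    have h2 : (Pi4 ^ 2 * q) * (s₁ * s₂ - s₀ * s₀) = 1 := by
      rw [hs2def]
      linear_combination (Pi4 * L₀ - D) * E1 - 2 * Pi4 * s₀ * E0 + K2
    nlinarith [mul_pos (mul_pos (pow_pos hPi4 2) hq) (mul_pos hs1 hs2), h2, pow_pos hPi4 2, hq]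
  have hSdef : S = !![s₁, s₀; s₀, s₂] := rfl
  have hAdef : A = !![0, 1; D, 0] := rfl
  have hBdef : B = !![0; 1] := rfl
  have hCdef : C = !![Pi4, 0] := rfl
  clear_value A B C S
  refine ⟨?_, ⟨?_, ?_⟩, ?_, ?_⟩
  · show Sᵀ = S
    rw [hSdef]
    ext i j
    fin_cases i <;> fin_cases j <;> simp
  · show Sᴴ = S
    rw [hSdef]
    ext i j
    fin_cases i <;> fin_cases j <;> simp
  · intro x hx
    have hx' : x 0 ≠ 0 ∨ x 1 ≠ 0 := by
      by_contra h
      push_neg at h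
      exact hx (by ext i; fin_cases i <;> simp [h.1, h.2])
    rw [hSdef]
    simp [Finsupp.sum_fintype, Fin.sum_univ_two]
    rcases eq_or_ne (x 1) 0 with h1 | h1
    · have h0 : x 0 ≠ 0 := by
        rcases hx' with h | h
        · exact h
        · exact absurd h1 h
      simp only [h1, mul_zero, zero_mul, add_zero, zero_add]
      nlinarith [hs1, mul_self_pos.mpr h0]
    · nlinarith [hs1, hdetpos, sq_nonneg (s₁ * x 0 + s₀ * x 1),
        mul_pos hdetpos (mul_self_pos.mpr h1)]
  · rw [hSdef, hAdef, hBdef, hCdef]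
    ext i j
    fin_cases i <;> fin_cases j <;>
      (simp [Matrix.mul_apply, Fin.sum_univ_two, Fin.sum_univ_one, Matrix.transpose_apply,
        Matrix.vecHead, Matrix.vecTail, Matrix.smul_apply, smul_eq_mul, Matrix.vecMul, dotProduct])
    · linear_combination -E1
    · linear_combination hs2def - Pi4 * s₁ * E0
    · linear_combination hs2def - Pi4 * s₁ * E0
    · linear_combination -K2
  · rw [hSdef, hCdef]
    ext i j
    fin_cases i <;> fin_cases j <;>
      (simp [Matrix.mul_apply, Fin.sum_univ_two, Matrix.transpose_apply,
        Matrix.vecHead, Matrix.vecTail, Matrix.smul_apply, smul_eq_mul, Matrix.vecMul, dotProduct])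
    · have h : 2 * L₀ / Pi4 = (q * (s₁ * Pi4)) ^ 2 := by
        rw [div_eq_iff hPi4.ne']
        linear_combination (-(Pi4 * q)) * E1 - 2 * E0
      rw [h, Real.sqrt_sq (mul_nonneg hq.le (mul_nonneg hs1.le hPi4.le))]
    · linear_combination Pi4 * q * s₀ - L₀ + E0
end

section
/- Define K̂0 := D + √(D² + Π3²·(1 − Π1·D)) and K̂2 := √(2·K̂0 + Π2·Π3²). Then the closed-loop matrix A − B·[K̂0, K̂2] = [[0, 1],[D − K̂0, −K̂2]] is Hurwitz: every eigenvalue λ ∈ ℂ of this 2×2 real matrix satisfies Re λ < 0. -/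
open Matrix Polynomial

/-- The closed-loop matrix `A − B·[K̂0, K̂2] = [[0, 1],[D − K̂0, −K̂2]]` of the
frequency-domain LQR problem for the discretized wave equation is Hurwitz:
every complex eigenvalue has strictly negative real part. -/
theorem lqr_closed_loop_hurwitz (n : ℕ) (hn : 1 ≤ n) (k : Fin n)
    (Pi1 Pi2 Pi3 : ℝ) (hPi1 : 0 ≤ Pi1) (hPi2 : 0 < Pi2) (hPi3 : 0 < Pi3) :
    let D : ℝ := -4 * Real.sin (Real.pi * ((k : ℕ) : ℝ) / (n : ℝ)) ^ 2
    let A : Matrix (Fin 2) (Fin 2) ℝ := !![0, 1; D, 0]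
    let B : Matrix (Fin 2) (Fin 1) ℝ := !![0; 1]
    let K₀ : ℝ := D + Real.sqrt (D ^ 2 + Pi3 ^ 2 * (1 - Pi1 * D))
    let K₂ : ℝ := Real.sqrt (2 * K₀ + Pi2 * Pi3 ^ 2)
    A - B * !![K₀, K₂] = !![0, 1; D - K₀, -K₂] ∧
      ∀ μ : ℂ, (((A - B * !![K₀, K₂]).map (algebraMap ℝ ℂ)).charpoly.eval μ = 0) →
        μ.re < 0 := by
  intro D A B K₀ K₂
  have hD : D ≤ 0 := by
    have := sq_nonneg (Real.sin (Real.pi * ((k : ℕ) : ℝ) / (n : ℝ)))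
    simp only [D]; nlinarith
  have hsq : Real.sqrt (D ^ 2) < Real.sqrt (D ^ 2 + Pi3 ^ 2 * (1 - Pi1 * D)) := by
    apply Real.sqrt_lt_sqrt (sq_nonneg D)
    nlinarith [mul_nonneg hPi1 (neg_nonneg.mpr hD), sq_nonneg Pi3]
  have hsqD : Real.sqrt (D ^ 2) = -D := by
    rw [Real.sqrt_sq_eq_abs, abs_of_nonpos hD]
  have hK₀ : 0 < K₀ := by
    have := hsq; rw [hsqD] at this
    simp only [K₀]; linarith
  have hK₂ : 0 < K₂ := by
    apply Real.sqrt_pos.mpr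
    nlinarith [sq_nonneg Pi3]
  have hmat : A - B * !![K₀, K₂] = !![0, 1; D - K₀, -K₂] := by
    ext i j
    fin_cases i <;> fin_cases j <;>
      simp [A, B, Matrix.mul_apply, Fin.sum_univ_succ, Matrix.sub_apply] <;> ring
  refine ⟨hmat, ?_⟩
  intro μ hμ
  rw [hmat] at hμ
  have hcp : (((!![0, 1; D - K₀, -K₂] : Matrix (Fin 2) (Fin 2) ℝ).map
      (algebraMap ℝ ℂ)).charpoly.eval μ) =
      μ ^ 2 + (K₂ : ℂ) * μ + ((K₀ - D : ℝ) : ℂ) := by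
    rw [Matrix.charpoly, Matrix.det_fin_two]
    simp [Matrix.charmatrix_apply, Matrix.map_apply, Matrix.diagonal]
    push_cast
    ring
  rw [hcp] at hμ
  have him : μ.im * (2 * μ.re + K₂) = 0 := by
    have := congrArg Complex.im hμ
    simp [pow_two, Complex.add_im, Complex.mul_im, Complex.mul_re] at this
    nlinarith [this]
  have hre : μ.re ^ 2 - μ.im ^ 2 + K₂ * μ.re + (K₀ - D) = 0 := by
    have := congrArg Complex.re hμ
    simp [pow_two, Complex.add_re, Complex.mul_re, Complex.mul_im] at this
    nlinarith [this]
  by_contra h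
  push_neg at h
  have h2 : 2 * μ.re + K₂ > 0 := by linarith
  have him0 : μ.im = 0 := by
    rcases mul_eq_zero.mp him with h' | h'
    · exact h'
    · linarith
  rw [him0] at hre
  nlinarith [sq_nonneg μ.re, mul_nonneg h (le_of_lt hK₂)]
end

section
/- Define L̂0 := D/Π4 + √(D²/Π4² − Π1·D + 1) and L̂1 := √(2·L̂0/Π4). Then the closed-loop estimator matrix A − [L̂1, L̂0]ᵀ·C = [[−Π4·L̂1, 1],[D − Π4·L̂0, 0]] is Hurwitz: every eigenvalue λ ∈ ℂ of this 2×2 real matrix satisfies Re λ < 0. -/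
open Matrix Polynomial

lemma quad_root_re_neg (a b : ℝ) (ha : 0 < a) (hb : 0 < b) (μ : ℂ)
    (h : μ ^ 2 + (a : ℂ) * μ + (b : ℂ) = 0) : μ.re < 0 := by
  by_contra hx
  push_neg at hx
  have h1 := congrArg Complex.re h
  have h2 := congrArg Complex.im h
  simp [Complex.add_re, Complex.add_im, Complex.mul_re, Complex.mul_im, pow_two] at h1 h2
  set x := μ.re
  set y := μ.im
  have h2' : y * (2 * x + a) = 0 := by ring_nf; ring_nf at h2; linarith
  have hy : y = 0 := by
    rcases mul_eq_zero.mp h2' with h | h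
    · exact h
    · nlinarith
  rw [hy] at h1
  nlinarith

/-- The closed-loop estimator matrix
`A − [L̂1, L̂0]ᵀ·C = [[−Π4·L̂1, 1],[D − Π4·L̂0, 0]]` of the frequency-domain
Kalman filter for the discretized wave equation is Hurwitz: every complex
eigenvalue has strictly negative real part. -/
theorem kf_closed_loop_hurwitz (n : ℕ) (hn : 1 ≤ n) (k : Fin n)
    (Pi1 Pi4 : ℝ) (hPi1 : 0 ≤ Pi1) (hPi4 : 0 < Pi4) :
    let D : ℝ := -4 * Real.sin (Real.pi * ((k : ℕ) : ℝ) / (n : ℝ)) ^ 2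
    let A : Matrix (Fin 2) (Fin 2) ℝ := !![0, 1; D, 0]
    let C : Matrix (Fin 1) (Fin 2) ℝ := !![Pi4, 0]
    let L₀ : ℝ := D / Pi4 + Real.sqrt (D ^ 2 / Pi4 ^ 2 - Pi1 * D + 1)
    let L₁ : ℝ := Real.sqrt (2 * L₀ / Pi4)
    A - !![L₁; L₀] * C = !![-(Pi4 * L₁), 1; D - Pi4 * L₀, 0] ∧
      ∀ μ : ℂ, (((A - !![L₁; L₀] * C).map (algebraMap ℝ ℂ)).charpoly.eval μ = 0) →
        μ.re < 0 := by
  intro D A C L₀ L₁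
  have hD : D ≤ 0 := by
    have := sq_nonneg (Real.sin (Real.pi * ((k : ℕ) : ℝ) / (n : ℝ)))
    simp only [D]; nlinarith
  have hDP : 0 ≤ D ^ 2 / Pi4 ^ 2 := by positivity
  have hDP1 : 0 ≤ -(Pi1 * D) := by nlinarith
  have hrad1 : (1 : ℝ) ≤ D ^ 2 / Pi4 ^ 2 - Pi1 * D + 1 := by linarith
  have hrad : (1 : ℝ) ≤ Real.sqrt (D ^ 2 / Pi4 ^ 2 - Pi1 * D + 1) := by
    have := Real.sqrt_le_sqrt hrad1
    rwa [Real.sqrt_one] at this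
  have hsq : Real.sqrt (D ^ 2 / Pi4 ^ 2 - Pi1 * D + 1) ^ 2
      = D ^ 2 / Pi4 ^ 2 - Pi1 * D + 1 := Real.sq_sqrt (by linarith)
  have ht : D / Pi4 ≤ 0 := div_nonpos_of_nonpos_of_nonneg hD hPi4.le
  have hL₀ : 0 < L₀ := by
    simp only [L₀]
    set s := Real.sqrt (D ^ 2 / Pi4 ^ 2 - Pi1 * D + 1) with hs
    have hDD : D ^ 2 / Pi4 ^ 2 = (D / Pi4) ^ 2 := by ring
    rw [hDD] at hsq
    nlinarith [hsq, hrad, ht]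
  have hL₁ : 0 < L₁ := Real.sqrt_pos.mpr (div_pos (by linarith) hPi4)
  have hb : 0 < Pi4 * L₀ - D := by
    have h0 : Pi4 * L₀ = D + Pi4 * Real.sqrt (D ^ 2 / Pi4 ^ 2 - Pi1 * D + 1) := by
      simp only [L₀]; field_simp
    nlinarith
  have hM : A - !![L₁; L₀] * C = !![-(Pi4 * L₁), 1; D - Pi4 * L₀, 0] := by
    ext i j
    fin_cases i <;> fin_cases j <;>
      simp [A, C, Matrix.mul_apply, Fin.sum_univ_succ] <;> ring
  refine ⟨hM, fun μ hμ => ?_⟩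
  rw [hM] at hμ
  have hmap : (!![-(Pi4 * L₁), 1; D - Pi4 * L₀, 0] : Matrix (Fin 2) (Fin 2) ℝ).map
      (algebraMap ℝ ℂ) = !![((-(Pi4 * L₁) : ℝ) : ℂ), 1; ((D - Pi4 * L₀ : ℝ) : ℂ), 0] := by
    ext i j; fin_cases i <;> fin_cases j <;> simp [Matrix.map_apply]
  rw [hmap, Matrix.charpoly, Matrix.det_fin_two] at hμ
  simp [charmatrix_apply, Matrix.diagonal] at hμ
  apply quad_root_re_neg (Pi4 * L₁) (Pi4 * L₀ - D) (by positivity) hb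
  push_cast
  push_cast at hμ
  linear_combination hμ
end

section
/- Let n ≥ 1, Π1 ≥ 0, Π2 > 0, Π3 > 0, and suppose Π1 = 2/Π3. Then the Fourier-domain LQR gain is constant across all spatial frequencies: for every k ∈ {0,…,n−1}, K̂0(k) := D_k + √(D_k² + Π3²·(1 − Π1·D_k)) = Π3, and hence the full gain [K̂0(k), √(2·K̂0(k) + Π2·Π3²)] equals [Π3, √(2·Π3 + Π2·Π3²)] for every k. -/
/-- The `k`-th eigenvalue `−4·sin²(πk/n)` of the discrete periodic Laplacian. -/
noncomputable def Dlap (n k : ℕ) : ℝ := -4 * Real.sin (Real.pi * k / n) ^ 2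

/-- The scalar Fourier-domain LQR gain at spatial frequency `k` for the
PDE-informed LQR problem with Sobolev weight `Π1` and control weight `1/Π3²`. -/
noncomputable def Khat0 (n : ℕ) (Pi1 Pi3 : ℝ) (k : ℕ) : ℝ :=
  Dlap n k + Real.sqrt ((Dlap n k) ^ 2 + Pi3 ^ 2 * (1 - Pi1 * Dlap n k))

/-- When `Π1 = 2/Π3`, the Fourier-domain LQR gain is constant across all
spatial frequencies: `K̂0(k) = Π3` and the full gain
`[K̂0(k), √(2·K̂0(k) + Π2·Π3²)]` equals `[Π3, √(2·Π3 + Π2·Π3²)]` for every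
`k ∈ {0,…,n−1}`, i.e. the LQR feedback is completely decentralized. -/
theorem lqr_gain_decentralized (n : ℕ) (hn : 1 ≤ n) (Pi1 Pi2 Pi3 : ℝ)
    (hPi1 : 0 ≤ Pi1) (hPi2 : 0 < Pi2) (hPi3 : 0 < Pi3) (h : Pi1 = 2 / Pi3) :
    ∀ k : ℕ, k < n →
      Khat0 n Pi1 Pi3 k = Pi3 ∧
      ![Khat0 n Pi1 Pi3 k, Real.sqrt (2 * Khat0 n Pi1 Pi3 k + Pi2 * Pi3 ^ 2)] =
        ![Pi3, Real.sqrt (2 * Pi3 + Pi2 * Pi3 ^ 2)] := by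
  intro k hk
  have hD : Dlap n k ≤ 0 := by
    have := sq_nonneg (Real.sin (Real.pi * k / n))
    unfold Dlap; nlinarith
  have hmain : Khat0 n Pi1 Pi3 k = Pi3 := by
    unfold Khat0
    have hne : Pi3 ≠ 0 := ne_of_gt hPi3
    have heq : (Dlap n k) ^ 2 + Pi3 ^ 2 * (1 - Pi1 * Dlap n k)
        = (Pi3 - Dlap n k) ^ 2 := by
      subst h; field_simp; ring
    rw [heq, Real.sqrt_sq (by linarith)]
    ring
  exact ⟨hmain, by rw [hmain]⟩
end

section
/- Let n ≥ 1, Π1 ≥ 0, Π4 > 0, and suppose Π1 = 2/Π4. Then the Fourier-domain Kalman filter gain is constant across all spatial frequencies: for every k ∈ {0,…,n−1}, L̂0(k) := D_k/Π4 + √(D_k²/Π4² − Π1·D_k + 1) = 1, and hence the full gain [√(2·L̂0(k)/Π4), L̂0(k)]ᵀ equals [√(2/Π4), 1]ᵀ for every k. -/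
/-- The scalar Fourier-domain Kalman filter gain at spatial frequency `k` for
the PDE-informed estimation problem with Sobolev measurement-noise weight `Π1`
and sensing parameter `Π4`. -/
noncomputable def Lhat0 (n : ℕ) (Pi1 Pi4 : ℝ) (k : ℕ) : ℝ :=
  Dlap n k / Pi4 + Real.sqrt ((Dlap n k) ^ 2 / Pi4 ^ 2 - Pi1 * Dlap n k + 1)

/-- When `Π1 = 2/Π4`, the Fourier-domain Kalman filter gain is constant across
all spatial frequencies: `L̂0(k) = 1` and the full gain
`[√(2·L̂0(k)/Π4), L̂0(k)]ᵀ` equals `[√(2/Π4), 1]ᵀ` for every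
`k ∈ {0,…,n−1}`, i.e. the Kalman filter is completely decentralized. -/
theorem kf_gain_decentralized (n : ℕ) (hn : 1 ≤ n) (Pi1 Pi4 : ℝ)
    (hPi1 : 0 ≤ Pi1) (hPi4 : 0 < Pi4) (h : Pi1 = 2 / Pi4) :
    ∀ k : ℕ, k < n →
      Lhat0 n Pi1 Pi4 k = 1 ∧
      ![Real.sqrt (2 * Lhat0 n Pi1 Pi4 k / Pi4), Lhat0 n Pi1 Pi4 k] =
        ![Real.sqrt (2 / Pi4), 1] := by
  intro k hk
  have hD : Dlap n k ≤ 0 := by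
    have := sq_nonneg (Real.sin (Real.pi * k / n))
    unfold Dlap; nlinarith
  have hL : Lhat0 n Pi1 Pi4 k = 1 := by
    unfold Lhat0
    have hrad : (Dlap n k) ^ 2 / Pi4 ^ 2 - Pi1 * Dlap n k + 1
        = (1 - Dlap n k / Pi4) ^ 2 := by
      field_simp [h]
      rw [h]
      field_simp
      ring
    rw [hrad, Real.sqrt_sq (by have := div_nonpos_of_nonpos_of_nonneg hD hPi4.le; linarith : (0:ℝ) ≤ 1 - Dlap n k / Pi4)]
    ring
  refine ⟨hL, ?_⟩
  rw [hL]
  norm_num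
end

section
/- Let n ≥ 2 and Π3 > 0, and take Π1 = 0. Then the Fourier-domain LQR gain K̂0(k) := D_k + √(D_k² + Π3²) is not constant in k: K̂0(0) = Π3, and for every k ∈ {1,…,n−1} one has K̂0(k) < Π3. In particular, complete decentralization of the LQR gain is never optimal when the state cost contains no potential-energy (Sobolev) term. -/
/-- The scalar Fourier-domain LQR gain at spatial frequency `k` for the
discretized wave equation with ℓ₂ state cost (`Π1 = 0`). -/
noncomputable def Khat0L2 (n : ℕ) (Pi3 : ℝ) (k : ℕ) : ℝ :=
  Dlap n k + Real.sqrt ((Dlap n k) ^ 2 + Pi3 ^ 2)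

/-- With no potential-energy (Sobolev) term in the state cost (`Π1 = 0`), the
Fourier-domain LQR gain is not constant: `K̂0(0) = Π3` while `K̂0(k) < Π3` for
every `k ∈ {1,…,n−1}`, so complete decentralization is never optimal. -/
theorem lqr_gain_not_decentralizable_l2 (n : ℕ) (hn : 2 ≤ n) (Pi3 : ℝ)
    (hPi3 : 0 < Pi3) :
    Khat0L2 n Pi3 0 = Pi3 ∧
      ∀ k : ℕ, 1 ≤ k → k ≤ n - 1 → Khat0L2 n Pi3 k < Pi3 := by
  constructor
  · simp [Khat0L2, Dlap, Real.sqrt_sq hPi3.le]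
  · intro k hk1 hk2
    have hnpos : (0:ℝ) < n := by positivity
    have hx0 : (0:ℝ) < Real.pi * k / n := by
      have : (1:ℝ) ≤ k := by exact_mod_cast hk1
      have := Real.pi_pos
      positivity
    have hxpi : Real.pi * k / n < Real.pi := by
      have hkn : (k:ℝ) < n := by
        have : k < n := by omega
        exact_mod_cast this
      rw [div_lt_iff₀ hnpos]
      calc Real.pi * k < Real.pi * n := by
            exact mul_lt_mul_of_pos_left hkn Real.pi_pos
        _ = Real.pi * n := rfl
    have hsin : 0 < Real.sin (Real.pi * k / n) := Real.sin_pos_of_pos_of_lt_pi hx0 hxpi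
    have hD : Dlap n k < 0 := by
      unfold Dlap; nlinarith
    have hPD : 0 < Pi3 - Dlap n k := by linarith
    have hsq : Real.sqrt ((Dlap n k) ^ 2 + Pi3 ^ 2) < Pi3 - Dlap n k := by
      have h1 : (Dlap n k) ^ 2 + Pi3 ^ 2 < (Pi3 - Dlap n k) ^ 2 := by nlinarith
      calc Real.sqrt ((Dlap n k) ^ 2 + Pi3 ^ 2)
          < Real.sqrt ((Pi3 - Dlap n k) ^ 2) := by
            apply Real.sqrt_lt_sqrt (by positivity) h1
        _ = Pi3 - Dlap n k := Real.sqrt_sq hPD.le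
    unfold Khat0L2
    linarith
end

section
/- Let n ≥ 2 and Π4 > 0, and take Π1 = 0. Then the Fourier-domain Kalman filter gain L̂0(k) := D_k/Π4 + √(D_k²/Π4² + 1) is not constant in k: L̂0(0) = 1, and for every k ∈ {1,…,n−1} one has L̂0(k) < 1. In particular, complete decentralization of the Kalman filter gain is never optimal when the measurement-noise cost contains no Sobolev term. -/
/-- The scalar Fourier-domain Kalman filter gain at spatial frequency `k` for
the discretized wave equation with ℓ₂ noise cost (`Π1 = 0`). -/
noncomputable def Lhat0L2 (n : ℕ) (Pi4 : ℝ) (k : ℕ) : ℝ :=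
  Dlap n k / Pi4 + Real.sqrt ((Dlap n k) ^ 2 / Pi4 ^ 2 + 1)

/-- With no Sobolev term in the measurement-noise cost (`Π1 = 0`), the
Fourier-domain Kalman filter gain is not constant: `L̂0(0) = 1` while
`L̂0(k) < 1` for every `k ∈ {1,…,n−1}`, so complete decentralization is never
optimal. -/
theorem kf_gain_not_decentralizable_l2 (n : ℕ) (hn : 2 ≤ n) (Pi4 : ℝ)
    (hPi4 : 0 < Pi4) :
    Lhat0L2 n Pi4 0 = 1 ∧
      ∀ k : ℕ, 1 ≤ k → k ≤ n - 1 → Lhat0L2 n Pi4 k < 1 := by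
  constructor
  · simp [Lhat0L2, Dlap, Real.sqrt_one]
  · intro k hk1 hk2
    have hnpos : (0:ℝ) < n := by positivity
    have hsin : 0 < Real.sin (Real.pi * k / n) := by
      apply Real.sin_pos_of_pos_of_lt_pi
      · have : (0:ℝ) < (k:ℝ) := by exact_mod_cast hk1
        positivity
      · have hkn : (k:ℝ) < n := by
          have : k < n := by omega
          exact_mod_cast this
        rw [div_lt_iff₀ hnpos]
        calc Real.pi * k < Real.pi * n := by
              exact mul_lt_mul_of_pos_left hkn Real.pi_pos
          _ = Real.pi * n := rfl
    have hD : Dlap n k < 0 := by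
      simp only [Dlap]
      nlinarith [sq_nonneg (Real.sin (Real.pi * k / n))]
    set x : ℝ := -(Dlap n k / Pi4) with hx
    have hxpos : 0 < x := by
      have : Dlap n k / Pi4 < 0 := div_neg_of_neg_of_pos hD hPi4
      rw [hx]; linarith
    have hkey : Real.sqrt ((Dlap n k) ^ 2 / Pi4 ^ 2 + 1) < 1 + x := by
      rw [show (Dlap n k) ^ 2 / Pi4 ^ 2 = x ^ 2 by rw [hx]; ring]
      rw [show x ^ 2 + 1 = (1 + x)^2 - 2*x by ring]
      calc Real.sqrt ((1+x)^2 - 2*x) < Real.sqrt ((1+x)^2) := by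
            apply Real.sqrt_lt_sqrt
            · nlinarith
            · nlinarith
        _ = 1 + x := Real.sqrt_sq (by linarith)
    unfold Lhat0L2
    linarith
end

section
/- Let n ≥ 2, Π1 ≥ 0, and Π3 > 0. Then the Fourier-domain LQR gain K̂0(k) := D_k + √(D_k² + Π3²·(1 − Π1·D_k)) is constant over k ∈ {0,…,n−1} (i.e., K̂0(k) = K̂0(0) for all k) if and only if Π1·Π3 = 2. -/
/-- The Fourier-domain LQR gain `K̂0(k)` is constant over `k ∈ {0,…,n−1}`
(complete decentralization of the LQR feedback gain) if and only if
`Π1·Π3 = 2`. -/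
theorem lqr_gain_constant_iff (n : ℕ) (hn : 2 ≤ n) (Pi1 Pi3 : ℝ)
    (hPi1 : 0 ≤ Pi1) (hPi3 : 0 < Pi3) :
    (∀ k : ℕ, k < n → Khat0 n Pi1 Pi3 k = Khat0 n Pi1 Pi3 0) ↔ Pi1 * Pi3 = 2 := by
  have hD0 : Dlap n 0 = 0 := by simp [Dlap]
  have hK0 : Khat0 n Pi1 Pi3 0 = Pi3 := by
    simp [Khat0, hD0, Real.sqrt_sq hPi3.le]
  have hDle : ∀ k, Dlap n k ≤ 0 := by
    intro k
    have := sq_nonneg (Real.sin (Real.pi * k / n))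
    simp only [Dlap]; nlinarith
  have hrad : ∀ k, 0 ≤ (Dlap n k) ^ 2 + Pi3 ^ 2 * (1 - Pi1 * Dlap n k) := by
    intro k
    nlinarith [hDle k, sq_nonneg (Dlap n k), sq_nonneg Pi3,
      mul_nonneg hPi1 (neg_nonneg.mpr (hDle k))]
  constructor
  · intro h
    have h1 : Khat0 n Pi1 Pi3 1 = Pi3 := by rw [h 1 (by omega), hK0]
    have hD1 : Dlap n 1 < 0 := by
      have hn0 : (0:ℝ) < n := by positivity
      have hs : 0 < Real.sin (Real.pi * 1 / n) := by
        apply Real.sin_pos_of_pos_of_lt_pi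
        · positivity
        · rw [mul_one, div_lt_iff₀ hn0]
          have h2 : (2:ℝ) ≤ n := by exact_mod_cast hn
          nlinarith [Real.pi_pos, mul_le_mul_of_nonneg_left h2 Real.pi_pos.le]
      simp only [Dlap]; nlinarith
    set d := Dlap n 1 with hd
    have hsq : Real.sqrt (d ^ 2 + Pi3 ^ 2 * (1 - Pi1 * d)) = Pi3 - d := by
      simp only [Khat0, ← hd] at h1; linarith
    have : d ^ 2 + Pi3 ^ 2 * (1 - Pi1 * d) = (Pi3 - d) ^ 2 := by
      rw [← hsq, Real.sq_sqrt (hrad 1)]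
    have hne : d ≠ 0 := ne_of_lt hD1
    have : d * (Pi3 ^ 2 * Pi1 - 2 * Pi3) = 0 := by ring_nf; ring_nf at this; nlinarith
    rcases mul_eq_zero.mp this with h' | h'
    · exact absurd h' hne
    · have : Pi3 * (Pi1 * Pi3 - 2) = 0 := by ring_nf; ring_nf at h'; linarith
      rcases mul_eq_zero.mp this with h'' | h''
      · exact absurd h'' (ne_of_gt hPi3)
      · linarith
  · intro h k _
    rw [hK0]
    simp only [Khat0]
    set d := Dlap n k with hd
    have key : d ^ 2 + Pi3 ^ 2 * (1 - Pi1 * d) = (Pi3 - d) ^ 2 := by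
      have : Pi3 ^ 2 * Pi1 = 2 * Pi3 := by nlinarith
      nlinarith
    rw [key, Real.sqrt_sq (by linarith [hDle k])]
    ring
end

section
/- Let n ≥ 2, Π1 ≥ 0, and Π4 > 0. Then the Fourier-domain Kalman filter gain L̂0(k) := D_k/Π4 + √(D_k²/Π4² − Π1·D_k + 1) is constant over k ∈ {0,…,n−1} (i.e., L̂0(k) = L̂0(0) for all k) if and only if Π1·Π4 = 2. -/
lemma Dlap_zero (n : ℕ) : Dlap n 0 = 0 := by simp [Dlap]

lemma Dlap_nonpos (n k : ℕ) : Dlap n k ≤ 0 := by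
  have := sq_nonneg (Real.sin (Real.pi * k / n))
  unfold Dlap; nlinarith

lemma Lhat0_zero (n : ℕ) (Pi1 Pi4 : ℝ) : Lhat0 n Pi1 Pi4 0 = 1 := by
  simp [Lhat0, Dlap_zero]

lemma Dlap_one_neg (n : ℕ) (hn : 2 ≤ n) : Dlap n 1 < 0 := by
  have hn0 : (0:ℝ) < n := by positivity
  have h1 : 0 < Real.pi * 1 / n := by positivity
  have h2 : Real.pi * 1 / n < Real.pi := by
    rw [div_lt_iff₀ hn0]
    have : (2:ℝ) ≤ n := by exact_mod_cast hn
    nlinarith [Real.pi_pos]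
  have hs : 0 < Real.sin (Real.pi * 1 / n) := Real.sin_pos_of_pos_of_lt_pi h1 h2
  unfold Dlap
  push_cast
  nlinarith

/-- The Fourier-domain Kalman filter gain `L̂0(k)` is constant over
`k ∈ {0,…,n−1}` (complete decentralization of the Kalman filter gain) if and
only if `Π1·Π4 = 2`. -/
theorem kf_gain_constant_iff (n : ℕ) (hn : 2 ≤ n) (Pi1 Pi4 : ℝ)
    (hPi1 : 0 ≤ Pi1) (hPi4 : 0 < Pi4) :
    (∀ k : ℕ, k < n → Lhat0 n Pi1 Pi4 k = Lhat0 n Pi1 Pi4 0) ↔ Pi1 * Pi4 = 2 := by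
  constructor
  · intro h
    have h1 := h 1 (by omega)
    rw [Lhat0_zero] at h1
    set d := Dlap n 1 with hd
    have hdneg : d < 0 := Dlap_one_neg n hn
    unfold Lhat0 at h1
    rw [← hd] at h1
    have hrhs : Real.sqrt (d ^ 2 / Pi4 ^ 2 - Pi1 * d + 1) = 1 - d / Pi4 := by
      linarith
    have hpos : 0 < 1 - d / Pi4 := by
      have : d / Pi4 < 0 := div_neg_of_neg_of_pos hdneg hPi4
      linarith
    have hEpos : 0 < d ^ 2 / Pi4 ^ 2 - Pi1 * d + 1 := by
      rw [← Real.sqrt_pos, hrhs]; exact hpos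
    have hsq : d ^ 2 / Pi4 ^ 2 - Pi1 * d + 1 = (1 - d / Pi4) ^ 2 := by
      have := Real.sq_sqrt hEpos.le
      rw [hrhs] at this
      linarith [this]
    have hPi4' : Pi4 ≠ 0 := ne_of_gt hPi4
    field_simp at hsq
    have key : Pi4 * d * (Pi1 * Pi4 - 2) = 0 := by linear_combination -hsq
    have hne : Pi4 * d ≠ 0 := (mul_neg_of_pos_of_neg hPi4 hdneg).ne
    rcases mul_eq_zero.mp key with h' | h'
    · exact absurd h' hne
    · linarith
  · intro h
    intro k hk
    rw [Lhat0_zero]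
    unfold Lhat0
    set d := Dlap n k with hd
    have hdnp : d ≤ 0 := Dlap_nonpos n k
    have hPi1' : Pi1 = 2 / Pi4 := by
      field_simp
      linarith [h]
    have hE : d ^ 2 / Pi4 ^ 2 - Pi1 * d + 1 = (1 - d / Pi4) ^ 2 := by
      rw [hPi1']
      field_simp
      ring
    have hnn : (0:ℝ) ≤ 1 - d / Pi4 := by
      have : d / Pi4 ≤ 0 := div_nonpos_of_nonpos_of_nonneg hdnp hPi4.le
      linarith
    rw [hE, Real.sqrt_sq hnn]
    ring
end
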